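/- Let t ≥ 3, k ≥ 3, and l ≥ t + 1, and let n be a positive integer. Suppose φ is a coloring of the edges of the complete graph on vertex set {1, …, n} with two colors, 'first' and 'second', containing no monochromatic K_k in color 'first' and no monochromatic K_{l − t + 1} in color 'second'. Define a coloring χ with colors 1, 2, 3 of the edges of the complete graph on vertex set {1, …, t + 1} × {1, …, n} as follows. For block indices i > j (with i, j ∈ {1, …, t + 1}), call the block pair (i, j) type B if (i, j) = (2, 1) or (i ≥ 4 and 3 ≤ j ≤ i − 1), and type C if i ≥ 3 and j ∈ {1, 2}. Set: (a) χ((i, v), (i, w)) = 2 if φ(v, w) = 'first' and 3 if φ(v, w) = 'second'; (b) for i ≠ j with block pair of type B: χ((i, v), (j, w)) = 3 if v = w, and otherwise 2 if φ(v, w) = 'first' and 1 if φ(v, w) = 'second'; (c) for i ≠ j with block pair of type C: χ((i, v), (j, w)) = 1 if v = w, and otherwise 2 if φ(v, w) = 'first' and 3 if φ(v, w) = 'second'. Then χ contains no monochromatic K_t of color 1, no monochromatic K_k of color 2, and no monochromatic K_l of color 3. -/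

import Mathlib

/-- The two colors of the base coloring `φ`. -/
inductive TwoColor
  | first
  | second
deriving DecidableEq

/-- A coloring `χ` of the edges of the complete graph on `V` contains a
monochromatic `K_m` of color `c`: there are `m` vertices all of whose
pairwise edges receive color `c`. -/
def HasMonoClique {V C : Type*} (χ : V → V → C) (c : C) (m : ℕ) : Prop :=
  ∃ s : Finset V, s.card = m ∧ ∀ u ∈ s, ∀ v ∈ s, u ≠ v → χ u v = c

/-- Block pair `(i, j)` (with 1-based block indices, `i > j`) is of type `B`:
`(i, j) = (2, 1)`, or `i ≥ 4` and `3 ≤ j ≤ i - 1`. -/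
def BlockTypeB (i j : ℕ) : Prop :=
  (i = 2 ∧ j = 1) ∨ (4 ≤ i ∧ 3 ≤ j ∧ j ≤ i - 1)

instance (i j : ℕ) : Decidable (BlockTypeB i j) := by
  unfold BlockTypeB; infer_instance

/-- The 3-coloring `χ` of the edges of the complete graph on
`{1, …, t+1} × {1, …, n}` built from a two-coloring `φ` of the edges of `K_n`.
Vertices are pairs `(i, v)` with block index `i` (represented 0-based, so the
1-based block index is `i + 1`).  Within a block the colors `first`/`second` of
`φ` become `2`/`3`; between two distinct blocks whose (ordered) 1-based pair is
of type `B`, diagonal edges (`v = w`) get color `3` and otherwise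
`first`/`second` become `2`/`1`; between blocks of type `C` (all remaining
pairs, i.e. `i ≥ 3` and `j ∈ {1, 2}`), diagonal edges get color `1` and
otherwise `first`/`second` become `2`/`3`. -/
def chi (t n : ℕ) (φ : Fin n → Fin n → TwoColor) :
    Fin (t + 1) × Fin n → Fin (t + 1) × Fin n → ℕ := fun p q =>
  if p.1 = q.1 then
    if φ p.2 q.2 = TwoColor.first then 2 else 3
  else
    if BlockTypeB (max (p.1.1 + 1) (q.1.1 + 1)) (min (p.1.1 + 1) (q.1.1 + 1)) then
      if p.2 = q.2 then 3
      else if φ p.2 q.2 = TwoColor.first then 2 else 1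
    else
      if p.2 = q.2 then 1
      else if φ p.2 q.2 = TwoColor.first then 2 else 3

private lemma blockB_iff (a b : ℕ) (h : a ≠ b) :
    BlockTypeB (max (a + 1) (b + 1)) (min (a + 1) (b + 1)) ↔ (a < 2 ↔ b < 2) := by
  unfold BlockTypeB
  omega

section chiLemmas

variable {t n : ℕ} {φ : Fin n → Fin n → TwoColor}

private lemma chi_same {p q : Fin (t + 1) × Fin n} (h : p.1 = q.1) :
    chi t n φ p q = if φ p.2 q.2 = TwoColor.first then 2 else 3 := by
  simp only [chi, if_pos h]

private lemma chi_B {p q : Fin (t + 1) × Fin n} (h : p.1 ≠ q.1)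
    (hB : (p.1.1 < 2 ↔ q.1.1 < 2)) :
    chi t n φ p q = if p.2 = q.2 then 3
      else if φ p.2 q.2 = TwoColor.first then 2 else 1 := by
  have hv : (p.1 : ℕ) ≠ (q.1 : ℕ) := fun hc => h (Fin.ext hc)
  simp only [chi, if_neg h, if_pos ((blockB_iff _ _ hv).mpr hB)]

private lemma chi_C {p q : Fin (t + 1) × Fin n} (h : p.1 ≠ q.1)
    (hB : ¬ (p.1.1 < 2 ↔ q.1.1 < 2)) :
    chi t n φ p q = if p.2 = q.2 then 1
      else if φ p.2 q.2 = TwoColor.first then 2 else 3 := by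
  have hv : (p.1 : ℕ) ≠ (q.1 : ℕ) := fun hc => h (Fin.ext hc)
  simp only [chi, if_neg h, if_neg (fun hc => hB ((blockB_iff _ _ hv).mp hc))]

end chiLemmas

private lemma card_le_interval {m a c : ℕ} (u : Finset (Fin m))
    (h : ∀ x ∈ u, a ≤ x.1 ∧ x.1 < a + c) : u.card ≤ c := by
  calc u.card ≤ (Finset.range c).card :=
        Finset.card_le_card_of_injOn (fun x => x.1 - a)
          (fun x hx => by simp only [Finset.mem_coe, Finset.mem_range]; have := h x hx; omega)
          (fun x hx y hy hxy => by
            have hx' := h x (Finset.mem_coe.mp hx)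
            have hy' := h y (Finset.mem_coe.mp hy)
            simp only at hxy
            exact Fin.ext (by omega))
    _ = c := Finset.card_range c

private lemma card_le_aux {α β : Type*} [DecidableEq α] [DecidableEq β] (u : Finset (α × β))
    (h : ∀ p ∈ u, ∀ q ∈ u, p.1 ≠ q.1 → p.2 = q.2) :
    u.card ≤ (u.image Prod.snd).card + ((u.image Prod.fst).card - 1) := by
  by_cases hb : ∀ p ∈ u, ∀ q ∈ u, p.1 = q.1
  · have hinj : Set.InjOn Prod.snd ↑u := fun p hp q hq h2 =>
      Prod.ext (hb p (Finset.mem_coe.mp hp) q (Finset.mem_coe.mp hq)) h2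
    rw [Finset.card_image_of_injOn hinj]
    omega
  · push_neg at hb
    obtain ⟨p, hp, q, hq, hpq⟩ := hb
    have hall : ∀ r ∈ u, ∀ w ∈ u, r.2 = w.2 := by
      intro r hr w hw
      by_cases hrw : r.1 = w.1
      · rcases ne_or_eq r.1 p.1 with h1 | h1
        · rw [h r hr p hp h1, h w hw p hp (hrw ▸ h1)]
        · have h2 : r.1 ≠ q.1 := h1 ▸ hpq
          rw [h r hr q hq h2, h w hw q hq (hrw ▸ h2)]
      · exact h r hr w hw hrw
    have hinj : Set.InjOn Prod.fst ↑u := fun r hr w hw h2 =>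
      Prod.ext h2 (hall r (Finset.mem_coe.mp hr) w (Finset.mem_coe.mp hw))
    have h1 : (u.image Prod.fst).card = u.card := Finset.card_image_of_injOn hinj
    have h2 : (u.image Prod.snd).card = 1 := by
      refine Finset.card_eq_one.mpr ⟨p.2, ?_⟩
      ext x
      simp only [Finset.mem_image, Finset.mem_singleton]
      constructor
      · rintro ⟨r, hr, rfl⟩; exact hall r hr p hp
      · rintro rfl; exact ⟨p, hp, rfl⟩
    have h3 : 1 ≤ (u.image Prod.fst).card := by
      rw [h1]; exact Finset.card_pos.mpr ⟨p, hp⟩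
    omega

/-- The coloring `chi t n φ` contains no monochromatic `K_t` of color `1`,
no monochromatic `K_k` of color `2`, and no monochromatic `K_l` of color `3`. -/
theorem chi_no_mono_cliques (t k l n : ℕ) (ht : 3 ≤ t) (hk : 3 ≤ k) (hl : t + 1 ≤ l) (hn : 0 < n)
    (φ : Fin n → Fin n → TwoColor)
    (hφsymm : ∀ v w, φ v w = φ w v)
    (hφ1 : ¬ HasMonoClique φ TwoColor.first k)
    (hφ2 : ¬ HasMonoClique φ TwoColor.second (l - t + 1)) :
    ¬ HasMonoClique (chi t n φ) 1 t ∧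
    ¬ HasMonoClique (chi t n φ) 2 k ∧
    ¬ HasMonoClique (chi t n φ) 3 l := by
  refine ⟨?_, ?_, ?_⟩
  -- Part 1 : no monochromatic K_t of color 1
  · rintro ⟨s, hcard, hcl⟩
    have hblk : ∀ p ∈ s, ∀ q ∈ s, p.1 = q.1 → p = q := by
      intro p hp q hq h
      by_contra hne
      have h1 := hcl p hp q hq hne
      rw [chi_same h] at h1
      split_ifs at h1 <;> omega
    set sL := s.filter (fun p => p.1.1 < 2) with hsLdef
    set sH := s.filter (fun p => ¬ p.1.1 < 2) with hsHdef
    have hsplit : sL.card + sH.card = t := by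
      rw [hsLdef, hsHdef, Finset.card_filter_add_card_filter_not, hcard]
    have hLle : sL.card ≤ 2 := by
      have hinj : Set.InjOn Prod.fst (sL : Set (Fin (t+1) × Fin n)) := by
        intro p hp q hq h
        exact hblk p (Finset.mem_of_mem_filter _ (Finset.mem_coe.mp hp))
          q (Finset.mem_of_mem_filter _ (Finset.mem_coe.mp hq)) h
      calc sL.card = (sL.image Prod.fst).card := (Finset.card_image_of_injOn hinj).symm
        _ ≤ 2 := card_le_interval (a := 0) _ (by
            intro x hx
            obtain ⟨p, hp, rfl⟩ := Finset.mem_image.mp hx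
            have := (Finset.mem_filter.mp hp).2
            omega)
    have hHle : sH.card ≤ t - 1 := by
      have hinj : Set.InjOn Prod.fst (sH : Set (Fin (t+1) × Fin n)) := by
        intro p hp q hq h
        exact hblk p (Finset.mem_of_mem_filter _ (Finset.mem_coe.mp hp))
          q (Finset.mem_of_mem_filter _ (Finset.mem_coe.mp hq)) h
      calc sH.card = (sH.image Prod.fst).card := (Finset.card_image_of_injOn hinj).symm
        _ ≤ t - 1 := card_le_interval (a := 2) _ (by
            intro x hx
            obtain ⟨p, hp, rfl⟩ := Finset.mem_image.mp hx
            have h2 := (Finset.mem_filter.mp hp).2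
            have h3 := p.1.isLt
            omega)
    have hkey : ∀ u ∈ sL, ∀ v ∈ sH, v.2 = u.2 := by
      intro u hu v hv
      have huS := Finset.mem_of_mem_filter _ hu
      have huL : u.1.1 < 2 := (Finset.mem_filter.mp hu).2
      have hvS := Finset.mem_of_mem_filter _ hv
      have hvH : ¬ v.1.1 < 2 := (Finset.mem_filter.mp hv).2
      have hne1 : u.1 ≠ v.1 := fun hc => hvH (hc ▸ huL)
      have hne : u ≠ v := fun hc => hne1 (by rw [hc])
      have h1 := hcl u huS v hvS hne
      rw [chi_C hne1 (by tauto)] at h1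
      split_ifs at h1 with h2 h3
      · exact h2.symm
      · omega
      · omega
    rcases Nat.lt_or_ge sH.card 2 with hH1 | hH2
    · -- at most one high vertex, so at least two low vertices
      have hL2 : 1 < sL.card := by omega
      obtain ⟨a, ha, b, hb, hab⟩ := Finset.one_lt_card.mp hL2
      have haS := Finset.mem_of_mem_filter _ ha
      have hbS := Finset.mem_of_mem_filter _ hb
      have haL : a.1.1 < 2 := (Finset.mem_filter.mp ha).2
      have hbL : b.1.1 < 2 := (Finset.mem_filter.mp hb).2
      have hne1 : a.1 ≠ b.1 := fun hc => hab (hblk a haS b hbS hc)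
      have h1 := hcl a haS b hbS hab
      rw [chi_B hne1 (by tauto)] at h1
      have hab2 : a.2 ≠ b.2 := by
        intro hc
        rw [if_pos hc] at h1
        omega
      have hHpos : 0 < sH.card := by omega
      obtain ⟨v, hv⟩ := Finset.card_pos.mp hHpos
      have e1 := hkey a ha v hv
      have e2 := hkey b hb v hv
      exact hab2 (e1.symm.trans e2)
    · -- at least two high vertices
      obtain ⟨a, ha, b, hb, hab⟩ := Finset.one_lt_card.mp hH2
      have haS := Finset.mem_of_mem_filter _ ha
      have hbS := Finset.mem_of_mem_filter _ hb
      have haH : ¬ a.1.1 < 2 := (Finset.mem_filter.mp ha).2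
      have hbH : ¬ b.1.1 < 2 := (Finset.mem_filter.mp hb).2
      have hLpos : 0 < sL.card := by omega
      obtain ⟨u, hu⟩ := Finset.card_pos.mp hLpos
      have e1 := hkey u hu a ha
      have e2 := hkey u hu b hb
      have hab2 : a.2 = b.2 := e1.trans e2.symm
      have hne1 : a.1 ≠ b.1 := fun hc => hab (Prod.ext hc hab2)
      have h1 := hcl a haS b hbS hab
      rw [chi_B hne1 (by tauto), if_pos hab2] at h1
      omega
  -- Part 2 : no monochromatic K_k of color 2
  · rintro ⟨s, hcard, hcl⟩
    apply hφ1
    have hinj : Set.InjOn Prod.snd (s : Set (Fin (t+1) × Fin n)) := by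
      intro p hp q hq h2
      by_contra hne
      have h1 := hcl p (Finset.mem_coe.mp hp) q (Finset.mem_coe.mp hq) hne
      have hne1 : p.1 ≠ q.1 := fun hc => hne (Prod.ext hc h2)
      by_cases hB : (p.1.1 < 2 ↔ q.1.1 < 2)
      · rw [chi_B hne1 hB, if_pos h2] at h1; omega
      · rw [chi_C hne1 hB, if_pos h2] at h1; omega
    refine ⟨s.image Prod.snd, by rw [Finset.card_image_of_injOn hinj, hcard], ?_⟩
    intro a ha b hb hab
    obtain ⟨p, hp, rfl⟩ := Finset.mem_image.mp ha
    obtain ⟨q, hq, rfl⟩ := Finset.mem_image.mp hb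
    have hne : p ≠ q := fun hc => hab (by rw [hc])
    have h1 := hcl p hp q hq hne
    by_cases hbl : p.1 = q.1
    · rw [chi_same hbl] at h1
      split_ifs at h1 with h2
      · exact h2
      · omega
    · by_cases hB : (p.1.1 < 2 ↔ q.1.1 < 2)
      · rw [chi_B hbl hB, if_neg hab] at h1
        split_ifs at h1 with h2
        · exact h2
        · omega
      · rw [chi_C hbl hB, if_neg hab] at h1
        split_ifs at h1 with h2
        · exact h2
        · omega
  -- Part 3 : no monochromatic K_l of color 3
  · rintro ⟨s, hcard, hcl⟩
    set W := s.image Prod.snd with hWdef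
    have hsec : ∀ a ∈ W, ∀ b ∈ W, a ≠ b → φ a b = TwoColor.second := by
      intro a ha b hb hab
      obtain ⟨p, hp, rfl⟩ := Finset.mem_image.mp ha
      obtain ⟨q, hq, rfl⟩ := Finset.mem_image.mp hb
      have hne : p ≠ q := fun hc => hab (by rw [hc])
      have h1 := hcl p hp q hq hne
      by_cases hbl : p.1 = q.1
      · rw [chi_same hbl] at h1
        split_ifs at h1 with h2
        · omega
        · cases hc : φ p.2 q.2 with
          | first => exact absurd hc h2
          | second => rfl
      · by_cases hB : (p.1.1 < 2 ↔ q.1.1 < 2)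
        · rw [chi_B hbl hB, if_neg hab] at h1
          split_ifs at h1 <;> omega
        · rw [chi_C hbl hB, if_neg hab] at h1
          split_ifs at h1 with h2
          · omega
          · cases hc : φ p.2 q.2 with
            | first => exact absurd hc h2
            | second => rfl
    have hBeq : ∀ p ∈ s, ∀ q ∈ s, p.1 ≠ q.1 → (p.1.1 < 2 ↔ q.1.1 < 2) → p.2 = q.2 := by
      intro p hp q hq hbl hB
      have hne : p ≠ q := fun hc => hbl (by rw [hc])
      have h1 := hcl p hp q hq hne
      rw [chi_B hbl hB] at h1
      by_contra h2
      rw [if_neg h2] at h1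
      split_ifs at h1 <;> omega
    set sL := s.filter (fun p => p.1.1 < 2) with hsLdef
    set sH := s.filter (fun p => ¬ p.1.1 < 2) with hsHdef
    have hsplit : sL.card + sH.card = l := by
      rw [hsLdef, hsHdef, Finset.card_filter_add_card_filter_not, hcard]
    have hLaux := card_le_aux sL (by
      intro p hp q hq h
      exact hBeq p (Finset.mem_of_mem_filter _ hp) q (Finset.mem_of_mem_filter _ hq) h
        (by have := (Finset.mem_filter.mp hp).2; have := (Finset.mem_filter.mp hq).2; tauto))
    have hHaux := card_le_aux sH (by
      intro p hp q hq h
      exact hBeq p (Finset.mem_of_mem_filter _ hp) q (Finset.mem_of_mem_filter _ hq) h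
        (by have := (Finset.mem_filter.mp hp).2; have := (Finset.mem_filter.mp hq).2; tauto))
    have himgL : (sL.image Prod.fst).card ≤ 2 := by
      apply card_le_interval (a := 0)
      intro x hx
      obtain ⟨p, hp, rfl⟩ := Finset.mem_image.mp hx
      have := (Finset.mem_filter.mp hp).2
      omega
    have himgH : (sH.image Prod.fst).card ≤ t - 1 := by
      apply card_le_interval (a := 2)
      intro x hx
      obtain ⟨p, hp, rfl⟩ := Finset.mem_image.mp hx
      have h2 := (Finset.mem_filter.mp hp).2
      have h3 := p.1.isLt
      omega
    have hdisj : Disjoint (sL.image Prod.snd) (sH.image Prod.snd) := by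
      rw [Finset.disjoint_left]
      intro a haL haH
      obtain ⟨p, hp, hp2⟩ := Finset.mem_image.mp haL
      obtain ⟨q, hq, hq2⟩ := Finset.mem_image.mp haH
      have hpL : p.1.1 < 2 := (Finset.mem_filter.mp hp).2
      have hqH : ¬ q.1.1 < 2 := (Finset.mem_filter.mp hq).2
      have hne1 : p.1 ≠ q.1 := fun hc => hqH (hc ▸ hpL)
      have hne : p ≠ q := fun hc => hne1 (by rw [hc])
      have h1 := hcl p (Finset.mem_of_mem_filter _ hp) q (Finset.mem_of_mem_filter _ hq) hne
      rw [chi_C hne1 (by tauto), if_pos (hp2.trans hq2.symm)] at h1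
      omega
    have hWcard : W.card = (sL.image Prod.snd).card + (sH.image Prod.snd).card := by
      rw [hWdef]
      conv_lhs => rw [← Finset.filter_union_filter_not_eq (fun p : Fin (t+1) × Fin n => p.1.1 < 2) s]
      rw [Finset.image_union, Finset.card_union_of_disjoint hdisj]
    have hWge : l - t + 1 ≤ W.card := by omega
    obtain ⟨w, hw, hwcard⟩ := Finset.exists_subset_card_eq hWge
    exact hφ2 ⟨w, hwcard, fun a ha b hb hab => hsec a (hw ha) b (hw hb) hab⟩
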